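/- arXiv:2403.09763 — 3 statements merged into one kernel-verified Lean document; each statement's English description precedes it below -/
import Mathlib

section
/- Fix K ∈ ℕ, battery capacity l_max ∈ ℝ, initial level λ₀ ≤ l_max, energy consumptions e_k ≥ 0 and charging caps c_k ≥ 0 for k = 0, …, K−1. For a charging schedule w = (w_0, …, w_{K−1}), define its battery levels by L_0 = λ₀ and L_{k+1} = L_k + w_k − e_k; call w admissible if 0 ≤ w_k ≤ c_k and L_k + w_k ≤ l_max for all k < K. Define the greedy levels by G_0 = λ₀ and G_{k+1} = min(l_max, G_k + c_k) − e_k. Then for every admissible schedule w with levels L, one has G_k ≥ L_k for all k = 0, …, K (greedy maximum-rate charging pointwise dominates every admissible schedule). -/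
/-- Battery levels of a charging schedule `w`: `L 0 = lam0`,
`L (k+1) = L k + w k - e k`. -/
def batteryLevels (lam0 : ℝ) (e w : ℕ → ℝ) : ℕ → ℝ
  | 0 => lam0
  | k + 1 => batteryLevels lam0 e w k + w k - e k

/-- Greedy (maximum-rate) battery levels: `G 0 = lam0`,
`G (k+1) = min lmax (G k + c k) - e k`. -/
def greedyLevels (lam0 lmax : ℝ) (e c : ℕ → ℝ) : ℕ → ℝ
  | 0 => lam0
  | k + 1 => min lmax (greedyLevels lam0 lmax e c k + c k) - e k

/-- Greedy maximum-rate charging pointwise dominates every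
admissible charging schedule. -/
theorem stmt3 (K : ℕ) (lmax lam0 : ℝ) (e c w : ℕ → ℝ)
    (h0 : lam0 ≤ lmax)
    (he : ∀ k < K, 0 ≤ e k) (hc : ∀ k < K, 0 ≤ c k)
    (hadm : ∀ k < K, 0 ≤ w k ∧ w k ≤ c k ∧ batteryLevels lam0 e w k + w k ≤ lmax) :
    ∀ k ≤ K, batteryLevels lam0 e w k ≤ greedyLevels lam0 lmax e c k := by
  intro k hk
  induction k with
  | zero => simp [batteryLevels, greedyLevels]
  | succ n ih =>
    have hn : n < K := hk
    have ihn := ih (le_of_lt hn)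
    obtain ⟨hw0, hwc, hlm⟩ := hadm n hn
    simp only [batteryLevels, greedyLevels]
    have : batteryLevels lam0 e w n + w n ≤ min lmax (greedyLevels lam0 lmax e c n + c n) := by
      refine le_min hlm ?_
      linarith
    linarith
end

section
/- Fix K ∈ ℕ, battery bounds l_min ≤ l_max in ℝ, initial level λ₀ with l_min ≤ λ₀ ≤ l_max, energy consumptions e_k ≥ 0 and charging caps c_k ≥ 0 for k = 0, …, K−1. There exists an admissible charging schedule w (i.e. 0 ≤ w_k ≤ c_k and L_k + w_k ≤ l_max for all k, where L_0 = λ₀ and L_{k+1} = L_k + w_k − e_k) whose levels satisfy L_k ≥ l_min for all k = 0, …, K, if and only if the greedy levels G_0 = λ₀, G_{k+1} = min(l_max, G_k + c_k) − e_k satisfy G_k ≥ l_min for all k = 0, …, K. Moreover the greedy levels are themselves realized by the admissible schedule w_k = min(c_k, l_max − G_k). (This is the correctness of the charge-feasibility check that charges each bus at the maximum possible rate at every charging opportunity.) -/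
/-- An admissible charging schedule keeping all levels at least
`lmin` exists iff the greedy levels stay at least `lmin`; moreover the greedy
levels are realized by the admissible schedule
`w k = min (c k) (lmax - G k)`. -/
theorem stmt4 (K : ℕ) (lmin lmax lam0 : ℝ) (e c : ℕ → ℝ)
    (hbounds : lmin ≤ lmax) (h0 : lmin ≤ lam0) (h0' : lam0 ≤ lmax)
    (he : ∀ k < K, 0 ≤ e k) (hc : ∀ k < K, 0 ≤ c k) :
    ((∃ w : ℕ → ℝ,
        (∀ k < K, 0 ≤ w k ∧ w k ≤ c k ∧ batteryLevels lam0 e w k + w k ≤ lmax) ∧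
        (∀ k ≤ K, lmin ≤ batteryLevels lam0 e w k)) ↔
      (∀ k ≤ K, lmin ≤ greedyLevels lam0 lmax e c k)) ∧
    (∀ k < K,
        0 ≤ min (c k) (lmax - greedyLevels lam0 lmax e c k) ∧
        min (c k) (lmax - greedyLevels lam0 lmax e c k) ≤ c k ∧
        batteryLevels lam0 e (fun j => min (c j) (lmax - greedyLevels lam0 lmax e c j)) k
          + min (c k) (lmax - greedyLevels lam0 lmax e c k) ≤ lmax) ∧
    (∀ k ≤ K,
        batteryLevels lam0 e (fun j => min (c j) (lmax - greedyLevels lam0 lmax e c j)) k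
          = greedyLevels lam0 lmax e c k) := by
  -- equality of greedy schedule levels with greedy levels (unconditional)
  have hBeq : ∀ k, batteryLevels lam0 e
      (fun j => min (c j) (lmax - greedyLevels lam0 lmax e c j)) k
      = greedyLevels lam0 lmax e c k := by
    intro k
    induction k with
    | zero => rfl
    | succ k ih =>
      simp only [batteryLevels, greedyLevels, ih]
      have : greedyLevels lam0 lmax e c k + min (c k) (lmax - greedyLevels lam0 lmax e c k)
          = min lmax (greedyLevels lam0 lmax e c k + c k) := by
        rcases le_total (c k) (lmax - greedyLevels lam0 lmax e c k) with h | h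
        · rw [min_eq_left h, min_eq_right (by linarith)]
        · rw [min_eq_right h, min_eq_left (by linarith)]; ring
      rw [this]
  -- greedy levels bounded above by lmax
  have hGle : ∀ k ≤ K, greedyLevels lam0 lmax e c k ≤ lmax := by
    intro k hk
    cases k with
    | zero => exact h0'
    | succ k =>
      have he' := he k (by omega)
      simp only [greedyLevels]
      have := min_le_left lmax (greedyLevels lam0 lmax e c k + c k)
      linarith
  -- admissibility of the greedy schedule
  have hadm : ∀ k < K,
      0 ≤ min (c k) (lmax - greedyLevels lam0 lmax e c k) ∧
      min (c k) (lmax - greedyLevels lam0 lmax e c k) ≤ c k ∧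
      batteryLevels lam0 e (fun j => min (c j) (lmax - greedyLevels lam0 lmax e c j)) k
        + min (c k) (lmax - greedyLevels lam0 lmax e c k) ≤ lmax := by
    intro k hk
    have hG := hGle k (le_of_lt hk)
    refine ⟨le_min (hc k hk) (by linarith), min_le_left _ _, ?_⟩
    rw [hBeq k]
    rcases le_total (c k) (lmax - greedyLevels lam0 lmax e c k) with h | h
    · rw [min_eq_left h]; linarith
    · rw [min_eq_right h]; linarith
  refine ⟨⟨?_, ?_⟩, hadm, fun k _ => hBeq k⟩
  · rintro ⟨w, hw, hlev⟩
    -- any admissible schedule is dominated by greedy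
    have hdom : ∀ k ≤ K, batteryLevels lam0 e w k ≤ greedyLevels lam0 lmax e c k := by
      intro k hk
      induction k with
      | zero => exact le_refl _
      | succ k ih =>
        have hk' : k < K := by omega
        obtain ⟨hw0, hwc, hwl⟩ := hw k hk'
        have ihk := ih (by omega)
        simp only [batteryLevels, greedyLevels]
        have : batteryLevels lam0 e w k + w k ≤ min lmax (greedyLevels lam0 lmax e c k + c k) :=
          le_min hwl (by linarith)
        linarith
    intro k hk
    exact le_trans (hlev k hk) (hdom k hk)
  · intro hG
    exact ⟨_, hadm, fun k hk => by rw [hBeq k]; exact hG k hk⟩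
end

section
/- Fix K ∈ ℕ, battery bounds l_min ≤ l_max in ℝ, initial level λ₀ with l_min ≤ λ₀ ≤ l_max, energy consumptions e_k ≥ 0 and caps c_k ≥ 0 for k = 0, …, K−1, and let G denote the greedy levels. Let 0 ≤ j ≤ K−1 and let ē ≥ 0 be the energy needed to deadhead from the end of opportunity j back to the depot. If G_k ≥ l_min for all k ≤ j and G_j − ē ≥ l_min, then the truncated charging problem with consumptions e_0, …, e_{j−1}, ē (and the same bounds, initial level, and caps c_0, …, c_j, with zero cap granted at the final depot arrival) is charge-feasible. (This justifies splitting an infeasible rotation at the last trip from which the bus can still return to the depot without its charge dropping below l_min.) -/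
/-- If the greedy levels stay above `lmin` up to opportunity `j`
and the bus can deadhead back to the depot from there (consuming `ebar`)
without dropping below `lmin`, then the truncated charging problem with
consumptions `e 0, …, e (j-1), ebar` is charge-feasible. -/
theorem stmt6 (K : ℕ) (lmin lmax lam0 : ℝ) (e c : ℕ → ℝ) (j : ℕ) (ebar : ℝ)
    (hbounds : lmin ≤ lmax) (h0 : lmin ≤ lam0) (h0' : lam0 ≤ lmax)
    (hj : j ≤ K - 1) (hK : 1 ≤ K) (hebar : 0 ≤ ebar)
    (he : ∀ k < K, 0 ≤ e k) (hc : ∀ k < K, 0 ≤ c k)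
    (hG : ∀ k ≤ j, lmin ≤ greedyLevels lam0 lmax e c k)
    (hGj : lmin ≤ greedyLevels lam0 lmax e c j - ebar) :
    ∃ w : ℕ → ℝ,
      (∀ k < j + 1, 0 ≤ w k ∧ w k ≤ c k ∧
        batteryLevels lam0 (fun i => if i = j then ebar else e i) w k + w k ≤ lmax) ∧
      (∀ k ≤ j + 1,
        lmin ≤ batteryLevels lam0 (fun i => if i = j then ebar else e i) w k) := by
  set G := greedyLevels lam0 lmax e c with hGdef
  have hjK : j < K := lt_of_le_of_lt hj (Nat.sub_lt hK one_pos)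
  -- greedy levels stay below lmax
  have hle : ∀ k ≤ j, G k ≤ lmax := by
    intro k hk
    cases k with
    | zero => exact h0'
    | succ n =>
      have hn : n < K := lt_of_lt_of_le (Nat.lt_of_lt_of_le (Nat.lt_succ_self n) hk) hjK.le
      have := he n hn
      simp only [hGdef, greedyLevels]
      have : min lmax (G n + c n) ≤ lmax := min_le_left _ _
      linarith [he n hn]
  set w : ℕ → ℝ := fun k => min (c k) (lmax - G k) with hwdef
  have hw0 : ∀ k ≤ j, 0 ≤ w k := by
    intro k hk
    exact le_min (hc k (lt_of_le_of_lt hk hjK)) (by linarith [hle k hk])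
  set e' : ℕ → ℝ := fun i => if i = j then ebar else e i with he'def
  have hwg0 : ∀ k, G k + w k = min lmax (G k + c k) := by
    intro k
    simp only [hwdef]
    rcases le_total (c k) (lmax - G k) with h | h
    · rw [min_eq_left h, min_eq_right (by linarith)]
    · rw [min_eq_right h, min_eq_left (by linarith)]
      try ring
  -- levels equal greedy levels up to j
  have hL : ∀ k ≤ j, batteryLevels lam0 e' w k = G k := by
    intro k hk
    induction k with
    | zero => rfl
    | succ n ih =>
      have hnj : n < j := hk
      have := ih hnj.le
      simp only [batteryLevels, this]
      have he'n : e' n = e n := by simp [he'def, Nat.ne_of_lt hnj]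
      have hwg : G n + w n = min lmax (G n + c n) := hwg0 n
      rw [he'n]
      simp only [hGdef, greedyLevels]
      rw [← hwg]
      try ring
  refine ⟨w, ?_, ?_⟩
  · intro k hk
    have hk' : k ≤ j := Nat.lt_succ_iff.mp hk
    refine ⟨hw0 k hk', min_le_left _ _, ?_⟩
    rw [hL k hk', hwg0 k]
    exact min_le_left _ _
  · intro k hk
    rcases Nat.lt_succ_iff_lt_or_eq.mp (Nat.lt_succ_of_le hk) with h | h
    · rw [hL k (Nat.lt_succ_iff.mp h)]
      exact hG k (Nat.lt_succ_iff.mp h)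
    · subst h
      simp only [batteryLevels, hL j le_rfl]
      have : e' j = ebar := by simp [he'def]
      rw [this]
      have := hw0 j le_rfl
      linarith
end
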